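/- The Lenard relation π_3 ∇H_1 = π_2 ∇H_2 holds on ℝ^N, where H_1 = Σ u_i, H_2 = Σ u_i²/2 + Σ u_i u_{i+1}, π_2 is the quadratic bracket {u_i,u_{i+1}} = u_i u_{i+1}, and π_3 is the cubic bracket {u_i,u_{i+1}} = u_i u_{i+1}(u_i + u_{i+1}), {u_i,u_{i+2}} = u_i u_{i+1} u_{i+2}. -/

import Mathlib

/-- Partial derivative of a function on `ℝ^ℕ` with respect to the `k`-th coordinate. -/
noncomputable def pd (f : (ℕ → ℝ) → ℝ) (k : ℕ) (u : ℕ → ℝ) : ℝ :=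
  deriv (fun x => f (Function.update u k x)) (u k)

/-- The quadratic Poisson bivector `π₂`. -/
noncomputable def pi2Biv (u : ℕ → ℝ) (i j : ℕ) : ℝ :=
  if j = i + 1 then u i * u j
  else if i = j + 1 then -(u i * u j)
  else 0

/-- The cubic Poisson bivector `π₃`. -/
noncomputable def pi3Biv (u : ℕ → ℝ) (i j : ℕ) : ℝ :=
  if j = i + 1 then u i * u j * (u i + u j)
  else if i = j + 1 then -(u j * u i * (u j + u i))
  else if j = i + 2 then u i * u (i + 1) * u j
  else if i = j + 2 then -(u j * u (j + 1) * u i)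
  else 0

lemma sum_if_single {s : Finset ℕ} {P : ℕ → Prop} [DecidablePred P] {v : ℕ} (b : ℕ → ℝ)
    (hv : v ∈ s) (hPv : P v) (h : ∀ j ∈ s, P j → j = v) :
    (∑ j ∈ s, if P j then b j else 0) = b v := by
  rw [Finset.sum_eq_single v]
  · rw [if_pos hPv]
  · intro j hj hne
    rw [if_neg fun hp => hne (h j hj hp)]
  · intro h'
    exact absurd hv h'

lemma sum_if_none {s : Finset ℕ} {P : ℕ → Prop} [DecidablePred P] (b : ℕ → ℝ)
    (h : ∀ j ∈ s, ¬ P j) :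
    (∑ j ∈ s, if P j then b j else 0) = 0 :=
  Finset.sum_eq_zero fun j hj => if_neg (h j hj)

lemma updHasDerivAt (u : ℕ → ℝ) (j k : ℕ) :
    HasDerivAt (fun x => Function.update u j x k) (if k = j then 1 else 0) (u j) := by
  rcases eq_or_ne k j with h | h
  · subst h
    simp only [Function.update_self, if_pos rfl]
    exact hasDerivAt_id _
  · simp only [Function.update_of_ne h, if_neg h]
    exact hasDerivAt_const _ _

lemma pd_H1 (N : ℕ) (u : ℕ → ℝ) {j : ℕ} (hj : j ∈ Finset.Icc 1 N) :
    pd (fun v => ∑ k ∈ Finset.Icc 1 N, v k) j u = 1 := by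
  rw [pd]
  have h : HasDerivAt (fun x => ∑ k ∈ Finset.Icc 1 N, Function.update u j x k)
      (∑ k ∈ Finset.Icc 1 N, if k = j then (1:ℝ) else 0) (u j) :=
    HasDerivAt.fun_sum fun k _ => updHasDerivAt u j k
  rw [h.deriv, Finset.sum_ite_eq', if_pos hj]

lemma pd_H2 (N : ℕ) (u : ℕ → ℝ) (hu0 : u 0 = 0) (huN : u (N + 1) = 0)
    {j : ℕ} (hj : j ∈ Finset.Icc 1 N) :
    pd (fun v => (∑ k ∈ Finset.Icc 1 N, (v k) ^ 2 / 2)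
        + ∑ k ∈ Finset.Icc 1 (N - 1), v k * v (k + 1)) j u
      = u (j - 1) + u j + u (j + 1) := by
  rw [pd]
  simp only [Finset.mem_Icc] at hj
  have h1 : ∀ k, HasDerivAt (fun x => (Function.update u j x k) ^ 2 / 2)
      (if k = j then u k else 0) (u j) := by
    intro k
    have h := ((updHasDerivAt u j k).fun_pow 2).div_const 2
    simp only [Function.update_eq_self] at h
    refine h.congr_deriv ?_
    split_ifs <;> push_cast <;> ring
  have h2 : ∀ k, HasDerivAt (fun x => Function.update u j x k * Function.update u j x (k + 1))
      ((if k = j then u (k + 1) else 0) + (if k + 1 = j then u k else 0)) (u j) := by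
    intro k
    have h := (updHasDerivAt u j k).fun_mul (updHasDerivAt u j (k + 1))
    simp only [Function.update_eq_self] at h
    refine h.congr_deriv ?_
    split_ifs <;> ring
  have key : HasDerivAt (fun x => (∑ k ∈ Finset.Icc 1 N, (Function.update u j x k) ^ 2 / 2)
      + ∑ k ∈ Finset.Icc 1 (N - 1), Function.update u j x k * Function.update u j x (k + 1))
      ((∑ k ∈ Finset.Icc 1 N, if k = j then u k else 0)
        + ∑ k ∈ Finset.Icc 1 (N - 1), ((if k = j then u (k + 1) else 0) + (if k + 1 = j then u k else 0)))
      (u j) :=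
    (HasDerivAt.fun_sum fun k _ => h1 k).add (HasDerivAt.fun_sum fun k _ => h2 k)
  rw [key.deriv, Finset.sum_add_distrib, Finset.sum_ite_eq', Finset.sum_ite_eq',
    if_pos (Finset.mem_Icc.mpr ⟨hj.1, hj.2⟩)]
  have hc : ∀ k, (if k + 1 = j then u k else 0) = (if k = j - 1 then u k else 0) := by
    intro k
    exact if_congr (by omega) rfl rfl
  rw [Finset.sum_congr rfl fun k _ => hc k, Finset.sum_ite_eq']
  have e1 : (if j ∈ Finset.Icc 1 (N - 1) then u (j + 1) else 0) = u (j + 1) := by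
    split_ifs with h
    · rfl
    · simp only [Finset.mem_Icc] at h
      have : j + 1 = N + 1 := by omega
      rw [this, huN]
  have e2 : (if j - 1 ∈ Finset.Icc 1 (N - 1) then u (j - 1) else 0) = u (j - 1) := by
    split_ifs with h
    · rfl
    · simp only [Finset.mem_Icc] at h
      have : j - 1 = 0 := by omega
      rw [this, hu0]
  rw [e1, e2]
  ring

/-- The Lenard relation `π₃ ∇H₁ = π₂ ∇H₂` on `ℝ^N` with `u₀ = u_{N+1} = 0`,
`H₁ = ∑ uᵢ`, `H₂ = ∑ uᵢ²/2 + ∑ uᵢuᵢ₊₁`. -/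
theorem lenard_relation (N : ℕ) (u : ℕ → ℝ) (hu0 : u 0 = 0) (huN : u (N + 1) = 0) :
    ∀ i ∈ Finset.Icc 1 N,
      ∑ j ∈ Finset.Icc 1 N,
          pi3Biv u i j * pd (fun v => ∑ k ∈ Finset.Icc 1 N, v k) j u
      = ∑ j ∈ Finset.Icc 1 N,
          pi2Biv u i j * pd (fun v => (∑ k ∈ Finset.Icc 1 N, (v k) ^ 2 / 2)
            + ∑ k ∈ Finset.Icc 1 (N - 1), v k * v (k + 1)) j u := by
  intro i hi
  have hi' := Finset.mem_Icc.mp hi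
  have L : (∑ j ∈ Finset.Icc 1 N,
      pi3Biv u i j * pd (fun v => ∑ k ∈ Finset.Icc 1 N, v k) j u)
      = ∑ j ∈ Finset.Icc 1 N,
        ((if j = i + 1 then u i * u j * (u i + u j) else 0)
        + (if i = j + 1 then -(u j * u i * (u j + u i)) else 0)
        + (if j = i + 2 then u i * u (i + 1) * u j else 0)
        + (if i = j + 2 then -(u j * u (j + 1) * u i) else 0)) := by
    refine Finset.sum_congr rfl fun j hj => ?_
    rw [pd_H1 N u hj, mul_one, pi3Biv]
    split_ifs <;> first | omega | ring1
  have R : (∑ j ∈ Finset.Icc 1 N,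
      pi2Biv u i j * pd (fun v => (∑ k ∈ Finset.Icc 1 N, (v k) ^ 2 / 2)
        + ∑ k ∈ Finset.Icc 1 (N - 1), v k * v (k + 1)) j u)
      = ∑ j ∈ Finset.Icc 1 N,
        ((if j = i + 1 then u i * u j * (u (j - 1) + u j + u (j + 1)) else 0)
        + (if i = j + 1 then -(u i * u j * (u (j - 1) + u j + u (j + 1))) else 0)) := by
    refine Finset.sum_congr rfl fun j hj => ?_
    rw [pd_H2 N u hu0 huN hj, pi2Biv]
    split_ifs <;> first | omega | ring1
  rw [L, R]
  simp only [Finset.sum_add_distrib]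
  have S1 : (∑ j ∈ Finset.Icc 1 N, if j = i + 1 then u i * u j * (u i + u j) else 0)
      = u i * u (i + 1) * (u i + u (i + 1)) := by
    by_cases h : i + 1 ≤ N
    · exact sum_if_single _ (Finset.mem_Icc.mpr ⟨by omega, h⟩) rfl fun j _ hp => hp
    · rw [sum_if_none _ fun j hj hp => by simp only [Finset.mem_Icc] at hj; omega]
      have : u (i + 1) = 0 := by rw [show i + 1 = N + 1 by omega]; exact huN
      rw [this]; ring
  have S2 : (∑ j ∈ Finset.Icc 1 N, if i = j + 1 then -(u j * u i * (u j + u i)) else 0)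
      = -(u (i - 1) * u i * (u (i - 1) + u i)) := by
    by_cases h : 2 ≤ i
    · exact sum_if_single _ (Finset.mem_Icc.mpr ⟨by omega, by omega⟩) (by omega)
        fun j _ hp => by omega
    · rw [sum_if_none _ fun j hj hp => by simp only [Finset.mem_Icc] at hj; omega]
      have : u (i - 1) = 0 := by rw [show i - 1 = 0 by omega]; exact hu0
      rw [this]; ring
  have S3 : (∑ j ∈ Finset.Icc 1 N, if j = i + 2 then u i * u (i + 1) * u j else 0)
      = u i * u (i + 1) * u (i + 2) := by
    by_cases h : i + 2 ≤ N
    · exact sum_if_single _ (Finset.mem_Icc.mpr ⟨by omega, h⟩) rfl fun j _ hp => hp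
    · rw [sum_if_none _ fun j hj hp => by simp only [Finset.mem_Icc] at hj; omega]
      rcases (by omega : i = N ∨ i + 1 = N) with h' | h'
      · have : u (i + 1) = 0 := by rw [show i + 1 = N + 1 by omega]; exact huN
        rw [this]; ring
      · have : u (i + 2) = 0 := by rw [show i + 2 = N + 1 by omega]; exact huN
        rw [this]; ring
  have S4 : (∑ j ∈ Finset.Icc 1 N, if i = j + 2 then -(u j * u (j + 1) * u i) else 0)
      = -(u (i - 2) * u (i - 1) * u i) := by
    by_cases h : 3 ≤ i
    · rw [sum_if_single (P := fun j => i = j + 2) (v := i - 2) (fun j => -(u j * u (j + 1) * u i))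
        (Finset.mem_Icc.mpr ⟨by omega, by omega⟩) (by omega) (fun j _ hp => by omega),
        show i - 2 + 1 = i - 1 by omega]
    · rw [sum_if_none _ fun j hj hp => by simp only [Finset.mem_Icc] at hj; omega]
      rcases (by omega : i = 1 ∨ i = 2) with h' | h'
      · have : u (i - 1) = 0 := by rw [show i - 1 = 0 by omega]; exact hu0
        rw [this]; ring
      · have : u (i - 2) = 0 := by rw [show i - 2 = 0 by omega]; exact hu0
        rw [this]; ring
  have T1 : (∑ j ∈ Finset.Icc 1 N,
      if j = i + 1 then u i * u j * (u (j - 1) + u j + u (j + 1)) else 0)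
      = u i * u (i + 1) * (u i + u (i + 1) + u (i + 2)) := by
    by_cases h : i + 1 ≤ N
    · rw [sum_if_single (P := fun j => j = i + 1) (v := i + 1)
        (fun j => u i * u j * (u (j - 1) + u j + u (j + 1)))
        (Finset.mem_Icc.mpr ⟨by omega, h⟩) rfl (fun j _ hp => hp),
        show i + 1 - 1 = i by omega, show i + 1 + 1 = i + 2 by omega]
    · rw [sum_if_none _ fun j hj hp => by simp only [Finset.mem_Icc] at hj; omega]
      have : u (i + 1) = 0 := by rw [show i + 1 = N + 1 by omega]; exact huN
      rw [this]; ring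
  have T2 : (∑ j ∈ Finset.Icc 1 N,
      if i = j + 1 then -(u i * u j * (u (j - 1) + u j + u (j + 1))) else 0)
      = -(u i * u (i - 1) * (u (i - 2) + u (i - 1) + u i)) := by
    by_cases h : 2 ≤ i
    · rw [sum_if_single (P := fun j => i = j + 1) (v := i - 1)
        (fun j => -(u i * u j * (u (j - 1) + u j + u (j + 1))))
        (Finset.mem_Icc.mpr ⟨by omega, by omega⟩) (by omega) (fun j _ hp => by omega),
        show i - 1 - 1 = i - 2 by omega, show i - 1 + 1 = i by omega]
    · rw [sum_if_none _ fun j hj hp => by simp only [Finset.mem_Icc] at hj; omega]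
      have : u (i - 1) = 0 := by rw [show i - 1 = 0 by omega]; exact hu0
      rw [this]; ring
  rw [S1, S2, S3, S4, T1, T2]
  ring
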